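/- arXiv:1108.0388 — 3 statements merged into one kernel-verified Lean document; each statement's English description precedes it below -/
import Mathlib

section
/- Chain lemma: Let α > 1, k ≥ 1, and let p₁,…,p_k and q₁,…,q_k be positive reals such that (i) q_i ≤ α·p_i for all 1 ≤ i ≤ k−1, (ii) q_i ≤ p_{i+1} for all 1 ≤ i ≤ k−1, and (iii) q_k ≤ p_k. Then Σ_{i=1}^k q_i ≤ ((2 − 1/α)·α^k − α)/(α^k − 1) · Σ_{i=1}^k p_i. -/
open Finset

lemma chain_aux (α R : ℝ) (t p : ℕ → ℝ) (ht0 : t 0 = 1)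
    (hrec : ∀ i, t (i + 1) * α = R - 1 + t i) :
    ∀ m, ∑ i ∈ Icc 1 m, (t i * (α * p i) + (1 - t i) * p (i + 1))
      = (∑ i ∈ Icc 1 m, R * p i) + (1 - t m) * p (m + 1) := by
  intro m
  induction m with
  | zero => simp [ht0]
  | succ n ih =>
    rw [Finset.sum_Icc_succ_top (by omega), Finset.sum_Icc_succ_top (by omega : 1 ≤ n + 1), ih]
    linear_combination p (n + 1) * hrec n

theorem stmt_3 (α : ℝ) (hα : 1 < α) (k : ℕ) (hk : 1 ≤ k) (p q : ℕ → ℝ)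
    (hp : ∀ i, 1 ≤ i → i ≤ k → 0 < p i) (hq : ∀ i, 1 ≤ i → i ≤ k → 0 < q i)
    (h1 : ∀ i, 1 ≤ i → i < k → q i ≤ α * p i)
    (h2 : ∀ i, 1 ≤ i → i < k → q i ≤ p (i + 1))
    (h3 : q k ≤ p k) :
    ∑ i ∈ Icc 1 k, q i ≤ ((2 - 1 / α) * α ^ k - α) / (α ^ k - 1) * ∑ i ∈ Icc 1 k, p i := by
  obtain ⟨m, rfl⟩ : ∃ m, k = m + 1 := ⟨k - 1, by omega⟩
  have hα0 : (0:ℝ) < α := by linarith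
  have hαne : α ≠ 0 := ne_of_gt hα0
  have hα1 : (0:ℝ) < α - 1 := by linarith
  have hαm : (1:ℝ) ≤ α ^ m := one_le_pow₀ (le_of_lt hα)
  have hD : (0:ℝ) < α ^ (m + 1) - 1 := by
    have : (1:ℝ) < α ^ (m + 1) := one_lt_pow₀ hα (by omega)
    linarith
  have hpow : α ^ (m + 1) = α ^ m * α := pow_succ α m
  have hN : (2 - 1 / α) * α ^ (m + 1) - α = (2 * α - 1) * α ^ m - α := by
    rw [hpow]; field_simp
  have hpowpos : ∀ i : ℕ, (0:ℝ) < α ^ i := fun i => pow_pos hα0 i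
  set R : ℝ := ((2 - 1 / α) * α ^ (m + 1) - α) / (α ^ (m + 1) - 1) with hRdef
  have hRD : R * (α ^ m * α - 1) = (2 * α - 1) * α ^ m - α := by
    rw [hRdef, hN, ← hpow, div_mul_cancel₀ _ (ne_of_gt hD)]
  have hR1 : 1 ≤ R := by
    rw [hRdef, le_div_iff₀ hD, hN, hpow]
    nlinarith [mul_nonneg (le_of_lt hα1) (by linarith : (0:ℝ) ≤ α ^ m - 1)]
  have hRα : R < α := by
    rw [hRdef, div_lt_iff₀ hD, hN, hpow]
    nlinarith [mul_pos (hpowpos m) (mul_pos hα1 hα1)]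
  set t : ℕ → ℝ := fun i => ((R - 1) * α ^ i + (α - R)) / ((α - 1) * α ^ i) with htdef
  have ht0 : t 0 = 1 := by
    simp [htdef]
    field_simp
    exact ne_of_gt hα1
  have hrec : ∀ i, t (i + 1) * α = R - 1 + t i := by
    intro i
    simp only [htdef]
    have h1 : ((α:ℝ) - 1) * α ^ (i + 1) ≠ 0 := by positivity
    have h2 : ((α:ℝ) - 1) * α ^ i ≠ 0 := by positivity
    field_simp
    ring
  have htm : t m = 2 - R := by
    simp only [htdef]
    rw [div_eq_iff (by positivity : ((α:ℝ) - 1) * α ^ m ≠ 0)]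
    linear_combination hRD
  have htlb : ∀ i, 0 ≤ t i := by
    intro i
    apply div_nonneg _ (by positivity)
    nlinarith [hpowpos i, hR1, hRα]
  have htub : ∀ i, t i ≤ 1 := by
    intro i
    rw [div_le_one (by positivity)]
    have h : (1:ℝ) ≤ α ^ i := one_le_pow₀ (le_of_lt hα)
    nlinarith [hRα]
  have hpt : ∀ i ∈ Icc 1 m, q i ≤ t i * (α * p i) + (1 - t i) * p (i + 1) := by
    intro i hi
    simp only [mem_Icc] at hi
    have hq1 := h1 i hi.1 (by omega)
    have hq2 := h2 i hi.1 (by omega)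
    nlinarith [htlb i, htub i]
  calc ∑ i ∈ Icc 1 (m + 1), q i
      = (∑ i ∈ Icc 1 m, q i) + q (m + 1) := Finset.sum_Icc_succ_top (by omega) q
    _ ≤ (∑ i ∈ Icc 1 m, (t i * (α * p i) + (1 - t i) * p (i + 1))) + p (m + 1) :=
        add_le_add (Finset.sum_le_sum hpt) h3
    _ = (∑ i ∈ Icc 1 m, R * p i) + (1 - t m) * p (m + 1) + p (m + 1) := by
        rw [chain_aux α R t p ht0 hrec m]
    _ = (∑ i ∈ Icc 1 m, R * p i) + R * p (m + 1) := by rw [htm]; ring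
    _ = ∑ i ∈ Icc 1 (m + 1), R * p i := (Finset.sum_Icc_succ_top (by omega) _).symm
    _ = R * ∑ i ∈ Icc 1 (m + 1), p i := by rw [Finset.mul_sum]
end

section
/- Let φ = (1+√5)/2 and α = φ². Then for every k ≥ 1, ((2 − 1/α)·α^k − α)/(α^k − 1) ≤ φ. -/
theorem stmt_5 (φ α : ℝ) (hφ : φ = (1 + Real.sqrt 5) / 2) (hα : α = φ ^ 2)
    (k : ℕ) (hk : 1 ≤ k) :
    ((2 - 1 / α) * α ^ k - α) / (α ^ k - 1) ≤ φ := by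
  have h5 : Real.sqrt 5 ^ 2 = 5 := Real.sq_sqrt (by norm_num)
  have hs : Real.sqrt 5 ≥ 2 := by nlinarith [Real.sqrt_nonneg 5]
  have hφ1 : φ > 1 := by rw [hφ]; nlinarith
  have hφ2 : φ ^ 2 = φ + 1 := by rw [hφ]; nlinarith
  have hα1 : α > 1 := by rw [hα]; nlinarith
  have hαk : α ^ k > 1 := one_lt_pow₀ hα1 (by omega)
  have hinv : 1 / α = 2 - φ := by
    rw [hα, hφ2]
    field_simp
    nlinarith
  rw [div_le_iff₀ (by linarith)]
  rw [hinv]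
  have : α = φ + 1 := by rw [hα, hφ2]
  nlinarith
end

section
/- Corollary of the chain lemma: Let φ = (1+√5)/2 and α = φ². If positive reals p₁,…,p_k, q₁,…,q_k satisfy q_i ≤ α·p_i for 1 ≤ i ≤ k−1, q_i ≤ p_{i+1} for 1 ≤ i ≤ k−1, and q_k ≤ p_k, then Σ q_i ≤ φ · Σ p_i. -/
open Finset

theorem stmt_6 (φ α : ℝ) (hφ : φ = (1 + Real.sqrt 5) / 2) (hα : α = φ ^ 2)
    (k : ℕ) (hk : 1 ≤ k) (p q : ℕ → ℝ)
    (hp : ∀ i, 1 ≤ i → i ≤ k → 0 < p i) (hq : ∀ i, 1 ≤ i → i ≤ k → 0 < q i)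
    (h1 : ∀ i, 1 ≤ i → i < k → q i ≤ α * p i)
    (h2 : ∀ i, 1 ≤ i → i < k → q i ≤ p (i + 1))
    (h3 : q k ≤ p k) :
    ∑ i ∈ Icc 1 k, q i ≤ φ * ∑ i ∈ Icc 1 k, p i := by
  obtain ⟨n, rfl⟩ : ∃ n, k = n + 1 := ⟨k - 1, (Nat.succ_pred_eq_of_pos hk).symm⟩
  have h5 : Real.sqrt 5 ^ 2 = 5 := Real.sq_sqrt (by norm_num)
  have hs : (0:ℝ) ≤ Real.sqrt 5 := Real.sqrt_nonneg 5
  have hφpos : 0 < φ := by rw [hφ]; nlinarith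
  have hφ2 : φ ^ 2 = φ + 1 := by rw [hφ]; nlinarith
  have hαpos : 0 < α := by rw [hα]; positivity
  have hsum1 : α⁻¹ + φ⁻¹ = 1 := by
    rw [hα]; field_simp; nlinarith
  have key : ∀ i ∈ Icc 1 n, q i ≤ p i + φ⁻¹ * p (i + 1) := by
    intro i hi
    simp only [mem_Icc] at hi
    have ha := h1 i hi.1 (by omega)
    have hb := h2 i hi.1 (by omega)
    have ha' : α⁻¹ * q i ≤ p i := by
      have := mul_le_mul_of_nonneg_left ha (inv_nonneg.2 hαpos.le)
      rwa [← mul_assoc, inv_mul_cancel₀ hαpos.ne', one_mul] at this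
    have hb' : φ⁻¹ * q i ≤ φ⁻¹ * p (i + 1) :=
      mul_le_mul_of_nonneg_left hb (inv_nonneg.2 hφpos.le)
    nlinarith [hq i hi.1 (by omega)]
  have hshift : ∑ i ∈ Icc 1 n, p (i + 1) = ∑ i ∈ Icc 2 (n + 1), p i := by
    rw [show Icc 2 (n+1) = Finset.map (addRightEmbedding 1) (Icc 1 n) by
      rw [Finset.map_add_right_Icc], Finset.sum_map]
    rfl
  have hsub : ∑ i ∈ Icc 2 (n + 1), p i ≤ ∑ i ∈ Icc 1 (n + 1), p i := by
    apply sum_le_sum_of_subset_of_nonneg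
    · apply Icc_subset_Icc_left; omega
    · intro i hi _
      simp only [mem_Icc] at hi
      exact (hp i hi.1 hi.2).le
  have hppos : 0 ≤ ∑ i ∈ Icc 1 (n + 1), p i := by
    apply sum_nonneg
    intro i hi; simp only [mem_Icc] at hi; exact (hp i hi.1 hi.2).le
  have hinv : 0 ≤ φ⁻¹ := inv_nonneg.2 hφpos.le
  calc ∑ i ∈ Icc 1 (n + 1), q i
      = ∑ i ∈ Icc 1 n, q i + q (n + 1) := sum_Icc_succ_top (by omega) q
    _ ≤ ∑ i ∈ Icc 1 n, (p i + φ⁻¹ * p (i + 1)) + p (n + 1) :=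
        add_le_add (sum_le_sum key) h3
    _ = (∑ i ∈ Icc 1 n, p i + p (n + 1)) + φ⁻¹ * ∑ i ∈ Icc 1 n, p (i + 1) := by
        rw [sum_add_distrib, mul_sum]; ring
    _ = ∑ i ∈ Icc 1 (n + 1), p i + φ⁻¹ * ∑ i ∈ Icc 2 (n + 1), p i := by
        rw [← sum_Icc_succ_top (by omega : 1 ≤ n + 1) p, hshift]
    _ ≤ ∑ i ∈ Icc 1 (n + 1), p i + φ⁻¹ * ∑ i ∈ Icc 1 (n + 1), p i :=
        add_le_add_right (mul_le_mul_of_nonneg_left hsub hinv) _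
    _ = (1 + φ⁻¹) * ∑ i ∈ Icc 1 (n + 1), p i := by ring
    _ ≤ φ * ∑ i ∈ Icc 1 (n + 1), p i := by
        apply mul_le_mul_of_nonneg_right _ hppos
        have h' : φ * (1 + φ⁻¹) = φ + 1 := by field_simp
        nlinarith
end
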